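/- Let G = (A, SPath^T_w) be a two-player zero-sum shortest-path game on a possibly infinite arena. For every α ∈ ℕ there exists a memoryless strategy σ_2^α of player 2 such that: (i) from every vertex v in player 2's winning region for the objective Safe(T) (equivalently, the complement of player 1's winning region for Reach(T)), every play consistent with σ_2^α from v never visits T; and (ii) from every vertex v, every play consistent with σ_2^α from v has shortest-path cost at least min{val(v), α}. -/

import Mathlib

open scoped ENNReal Classical

/-- An `n`-player arena on a (possibly infinite) directed graph: an edge relation
with no deadlocks, together with an assignment of each vertex to its owner. -/
structure Arena (V : Type) (n : ℕ) where
  E : V → V → Prop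
  owner : V → Fin n
  no_deadlock : ∀ v, ∃ v', E v v'

namespace Arena

variable {V : Type} {n : ℕ}

/-- A play: an infinite sequence of vertices following edges. -/
def IsPlay (A : Arena V n) (π : ℕ → V) : Prop := ∀ j, A.E (π j) (π (j + 1))

/-- A strategy: given the past history (the earlier vertices, oldest first) and the
current vertex, pick an `E`-successor of the current vertex. -/
structure Strategy (A : Arena V n) where
  next : List V → V → V
  valid : ∀ h v, A.E v (next h v)

/-- The list of the first `j` vertices of a play. -/
def pref (π : ℕ → V) (j : ℕ) : List V := (List.range j).map π

/-- A play is consistent with the strategy `σ` used by player `i`. -/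
def Consistent (A : Arena V n) (i : Fin n) (σ : A.Strategy) (π : ℕ → V) : Prop :=
  ∀ j, A.owner (π j) = i → π (j + 1) = σ.next (pref π j) (π j)

/-- A memoryless strategy only depends on the current vertex. -/
def Memoryless {A : Arena V n} (σ : A.Strategy) : Prop :=
  ∀ h h' v, σ.next h v = σ.next h' v

def outcomeAux (A : Arena V n) (σ : Fin n → A.Strategy) (v0 : V) : ℕ → List V × V
  | 0 => ([], v0)
  | j + 1 =>
      let p := outcomeAux A σ v0 j
      (p.1 ++ [p.2], (σ (A.owner p.2)).next p.1 p.2)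

/-- The outcome of the strategy profile `σ` from `v0`: the unique play from `v0`
consistent with every strategy of the profile. -/
def outcome (A : Arena V n) (σ : Fin n → A.Strategy) (v0 : V) (j : ℕ) : V :=
  (outcomeAux A σ v0 j).2

/-- Reachability objective: visit `T`. -/
def ReachObj (T : Set V) : Set (ℕ → V) := {π | ∃ j, π j ∈ T}

/-- Safety objective: never visit `T`. -/
def SafeObj (T : Set V) : Set (ℕ → V) := {π | ∀ j, π j ∉ T}

/-- Büchi objective: visit `T` infinitely often. -/
def BuchiObj (T : Set V) : Set (ℕ → V) := {π | ∀ j, ∃ k, j ≤ k ∧ π k ∈ T}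

/-- co-Büchi objective: visit `T` only finitely often. -/
def CoBuchiObj (T : Set V) : Set (ℕ → V) := {π | ∃ j, ∀ k, j ≤ k → π k ∉ T}

/-- Shortest-path cost of a play: the total weight up to the first visit of `T`,
and `⊤` if `T` is never visited. -/
noncomputable def spCost (w : V → V → ℕ) (T : Set V) (π : ℕ → V) : ℝ≥0∞ :=
  if ∃ k, π k ∈ T then
    (Finset.range (sInf {k | π k ∈ T})).sum fun j => (w (π j) (π (j + 1)) : ℝ≥0∞)
  else ⊤

/-- Winning region of player `p` (whose objective is `Ω`) in a two-player game:
vertices from which `p` has a strategy all of whose consistent plays lie in `Ω`. -/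
def WinRegion (A : Arena V 2) (p : Fin 2) (Ω : Set (ℕ → V)) : Set V :=
  {v | ∃ σ : A.Strategy, ∀ π, A.IsPlay π → π 0 = v → A.Consistent p σ π → π ∈ Ω}

/-- Lower value `inf_{σ₁} sup_{σ₂}` of a two-player zero-sum game with cost `c`
(minimised by player 1, maximised by player 2). -/
noncomputable def valIS (A : Arena V 2) (c : (ℕ → V) → ℝ≥0∞) (v : V) : ℝ≥0∞ :=
  ⨅ σ1 : A.Strategy, ⨆ σ2 : A.Strategy, c (outcome A ![σ1, σ2] v)

/-- Upper value `sup_{σ₂} inf_{σ₁}`. -/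
noncomputable def valSI (A : Arena V 2) (c : (ℕ → V) → ℝ≥0∞) (v : V) : ℝ≥0∞ :=
  ⨆ σ2 : A.Strategy, ⨅ σ1 : A.Strategy, c (outcome A ![σ1, σ2] v)

/-- Nash equilibrium from `v0` for cost functions (each player minimises):
no unilateral deviation decreases the deviator's cost. -/
def IsNECost (A : Arena V n) (cost : Fin n → (ℕ → V) → ℝ≥0∞)
    (σ : Fin n → A.Strategy) (v0 : V) : Prop :=
  ∀ (i : Fin n) (τ : A.Strategy),
    cost i (outcome A σ v0) ≤ cost i (outcome A (Function.update σ i τ) v0)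

/-- Nash equilibrium from `v0` for objectives: if a unilateral deviation of player `i`
satisfies `Ω i`, then so does the equilibrium outcome. -/
def IsNEObj (A : Arena V n) (Ω : Fin n → Set (ℕ → V))
    (σ : Fin n → A.Strategy) (v0 : V) : Prop :=
  ∀ (i : Fin n) (τ : A.Strategy),
    outcome A (Function.update σ i τ) v0 ∈ Ω i → outcome A σ v0 ∈ Ω i

/-- The coalition arena of player `i`: player `i` (as player `0`) against all others. -/
def coalition (A : Arena V n) (i : Fin n) : Arena V 2 where
  E := A.E
  owner := fun v => if A.owner v = i then 0 else 1
  no_deadlock := A.no_deadlock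

/-- Winning region of player `i` in their coalition game for objective `Ω`. -/
def coalWin (A : Arena V n) (i : Fin n) (Ω : Set (ℕ → V)) : Set V :=
  WinRegion (coalition A i) 0 Ω

/-- Value of a vertex in player `i`'s coalition game with cost `c`. -/
noncomputable def coalVal (A : Arena V n) (i : Fin n) (c : (ℕ → V) → ℝ≥0∞) (v : V) :
    ℝ≥0∞ :=
  valIS (coalition A i) c v

/-- Players whose reachability objective is satisfied by `π`. -/
def satReach (T : Fin n → Set V) (π : ℕ → V) : Set (Fin n) := {i | ∃ j, π j ∈ T i}

/-- Players whose safety objective is satisfied by `π`. -/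
def satSafe (T : Fin n → Set V) (π : ℕ → V) : Set (Fin n) := {i | ∀ j, π j ∉ T i}

/-- Players whose Büchi objective is satisfied by `π`. -/
def satBuchi (T : Fin n → Set V) (π : ℕ → V) : Set (Fin n) :=
  {i | ∀ j, ∃ k, j ≤ k ∧ π k ∈ T i}

/-- Players whose co-Büchi objective is satisfied by `π`. -/
def satCoBuchi (T : Fin n → Set V) (π : ℕ → V) : Set (Fin n) :=
  {i | ∃ j, ∀ k, j ≤ k → π k ∉ T i}

/-- Earliest positions at which the targets visited by `π` are first visited. -/
def visitSet (T : Fin n → Set V) (π : ℕ → V) : Set ℕ :=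
  {m | ∃ i, (∃ j, π j ∈ T i) ∧ m = sInf {j | π j ∈ T i}}

/-- A Mealy machine with memory states `M`. -/
structure Mealy (A : Arena V n) (M : Type) where
  init : M
  up : M → V → M
  nxt : M → V → V
  valid : ∀ m v, A.E v (nxt m v)

/-- The strategy `σ` is induced by the Mealy machine `mm`. -/
def InducedBy {A : Arena V n} {M : Type} (σ : A.Strategy) (mm : Mealy A M) : Prop :=
  ∀ h v, σ.next h v = mm.nxt (h.foldl mm.up mm.init) v

/-- `σ` has memory size at most `b`. -/
def HasMemorySize {A : Arena V n} (σ : A.Strategy) (b : ℕ) : Prop :=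
  ∃ (M : Type) (mm : Mealy A M), Finite M ∧ Nat.card M ≤ b ∧ InducedBy σ mm

/-- `σ` is a finite-memory strategy. -/
def FiniteMemory {A : Arena V n} (σ : A.Strategy) : Prop :=
  ∃ (M : Type) (mm : Mealy A M), Finite M ∧ InducedBy σ mm

/-- The (finite) segment of `π` between positions `a` and `b` is a simple history. -/
def SimpleSeg (π : ℕ → V) (a b : ℕ) : Prop :=
  ∀ m m', a ≤ m → m ≤ b → a ≤ m' → m' ≤ b → π m = π m' → m = m'

/-- The suffix of `π` from position `a` is a simple play. -/
def SimplePlaySeg (π : ℕ → V) (a : ℕ) : Prop :=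
  ∀ m m', a ≤ m → a ≤ m' → π m = π m' → m = m'

/-- The suffix of `π` from position `a` is a simple lasso `p c^ω` with `p c`
a simple history. -/
def SimpleLassoSeg (π : ℕ → V) (a : ℕ) : Prop :=
  ∃ k ℓ, 0 < ℓ ∧ (∀ m, a + k ≤ m → π (m + ℓ) = π m) ∧
    ∀ m m', a ≤ m → m < a + k + ℓ → a ≤ m' → m' < a + k + ℓ → π m = π m' → m = m'

/-- The segment of `π` between positions `a` and `b` is a simple cycle. -/
def SimpleCycleSeg (π : ℕ → V) (a b : ℕ) : Prop :=
  a < b ∧ π b = π a ∧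
    ∀ m m', a ≤ m → m < b → a ≤ m' → m' < b → π m = π m' → m = m'

/-- Total weight of a history (a list of vertices). -/
def histWeight (w : V → V → ℕ) : List V → ℕ
  | [] => 0
  | [_] => 0
  | a :: b :: t => w a b + histWeight w (b :: t)

/-- The list of vertices along positions `a..b` (inclusive) of a play. -/
def segList (π : ℕ → V) (a b : ℕ) : List V :=
  (List.range (b - a + 1)).map fun m => π (a + m)

/-- The segment of `π` between positions `a` and `b` has minimal weight among all
histories that share its first and last vertex and traverse only its vertices. -/
def MinWeightSeg (A : Arena V n) (w : V → V → ℕ) (π : ℕ → V) (a b : ℕ) : Prop :=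
  ∀ h : List V, h ≠ [] → List.Chain' A.E h →
    h.head? = some (π a) → h.getLast? = some (π b) →
    (∀ x ∈ h, ∃ m, a ≤ m ∧ m ≤ b ∧ π m = x) →
    histWeight w (segList π a b) ≤ histWeight w h

/-- Given cut positions `p`, segments number `l` and `l'` of `π` carry the same
vertex sequence. -/
def SegEq (π : ℕ → V) (p : ℕ → ℕ) (l l' : ℕ) : Prop :=
  p (l' + 1) - p l' = p (l + 1) - p l ∧
    ∀ m, m ≤ p (l + 1) - p l → π (p l' + m) = π (p l + m)

/-- There is no cycle of the arena using only vertices of `S` and avoiding `avoid`. -/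
def NoCycleAvoid (A : Arena V n) (S : Set V) (avoid : V) : Prop :=
  ¬ ∃ (m : ℕ) (c : ℕ → V), 0 < m ∧ (∀ j, j < m → A.E (c j) (c (j + 1))) ∧
      c m = c 0 ∧ ∀ j, j ≤ m → c j ∈ S ∧ c j ≠ avoid

end Arena

open Arena

section Aux

variable {V : Type} (A : Arena V 2) (T : Set V) (w : V → V → ℕ)

noncomputable def dflt (v : V) : V := (A.no_deadlock v).choose

lemma dflt_edge (v : V) : A.E v (dflt A v) := (A.no_deadlock v).choose_spec

noncomputable instance : Nonempty A.Strategy :=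
  ⟨⟨fun _ u => dflt A u, fun _ u => dflt_edge A u⟩⟩

lemma fin2 (i : Fin 2) : i = 0 ∨ i = 1 := by omega

/-- Prepend a vertex to a play. -/
def consP (v : V) (π : ℕ → V) : ℕ → V
  | 0 => v
  | j + 1 => π j

lemma pref_consP (v : V) (π : ℕ → V) (j : ℕ) :
    pref (consP v π) (j + 1) = v :: pref π j := by
  unfold pref
  rw [List.range_succ_eq_map]
  simp only [List.map_cons, List.map_map]
  rfl

lemma pref_succ_head (π : ℕ → V) (j : ℕ) :
    pref π (j + 1) = π 0 :: pref (fun m => π (m + 1)) j := by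
  unfold pref
  rw [List.range_succ_eq_map]
  simp only [List.map_cons, List.map_map]
  rfl

lemma outcomeAux_fst (σ : Fin 2 → A.Strategy) (v0 : V) (j : ℕ) :
    (outcomeAux A σ v0 j).1 = pref (outcome A σ v0) j := by
  induction j with
  | zero => rfl
  | succ j ih =>
      show (outcomeAux A σ v0 j).1 ++ [(outcomeAux A σ v0 j).2] = _
      rw [ih]
      unfold pref
      rw [List.range_succ, List.map_append]
      rfl

lemma outcome_succ (σ : Fin 2 → A.Strategy) (v0 : V) (j : ℕ) :
    outcome A σ v0 (j + 1) =
      (σ (A.owner (outcome A σ v0 j))).next (pref (outcome A σ v0) j)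
        (outcome A σ v0 j) := by
  rw [← outcomeAux_fst]; rfl

lemma outcome_isPlay (σ : Fin 2 → A.Strategy) (v0 : V) :
    A.IsPlay (outcome A σ v0) := fun j => by
  rw [outcome_succ]; exact (σ _).valid _ _

lemma outcome_consistent (σ : Fin 2 → A.Strategy) (v0 : V) (i : Fin 2) :
    A.Consistent i (σ i) (outcome A σ v0) := fun j hj => by
  rw [outcome_succ, hj]

lemma outcomeAux_congr (σ σ' : Fin 2 → A.Strategy) (v0 : V)
    (H : ∀ j i, (σ i).next (pref (outcome A σ v0) j) (outcome A σ v0 j)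
              = (σ' i).next (pref (outcome A σ v0) j) (outcome A σ v0 j)) :
    ∀ j, outcomeAux A σ v0 j = outcomeAux A σ' v0 j := by
  intro j
  induction j with
  | zero => rfl
  | succ j ih =>
      have h1 : (outcomeAux A σ v0 j).1 = pref (outcome A σ v0) j :=
        outcomeAux_fst A σ v0 j
      show ((outcomeAux A σ v0 j).1 ++ [(outcomeAux A σ v0 j).2],
              (σ (A.owner (outcomeAux A σ v0 j).2)).next (outcomeAux A σ v0 j).1
                (outcomeAux A σ v0 j).2)
          = ((outcomeAux A σ' v0 j).1 ++ [(outcomeAux A σ' v0 j).2],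
              (σ' (A.owner (outcomeAux A σ' v0 j).2)).next (outcomeAux A σ' v0 j).1
                (outcomeAux A σ' v0 j).2)
      rw [← ih, h1]
      exact congrArg _ (H j _)

lemma outcome_congr (σ σ' : Fin 2 → A.Strategy) (v0 : V)
    (H : ∀ j i, (σ i).next (pref (outcome A σ v0) j) (outcome A σ v0 j)
              = (σ' i).next (pref (outcome A σ v0) j) (outcome A σ v0 j)) :
    outcome A σ v0 = outcome A σ' v0 :=
  funext fun j => congrArg Prod.snd (outcomeAux_congr A σ σ' v0 H j)

/-- The strategy as seen after a one-vertex prefix. -/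
def shiftS (v : V) (σ : A.Strategy) : A.Strategy :=
  ⟨fun h u => σ.next (v :: h) u, fun h u => σ.valid _ _⟩

lemma outcomeAux_shift (σ : Fin 2 → A.Strategy) (v : V) (j : ℕ) :
    outcomeAux A σ v (j + 1)
      = (v :: (outcomeAux A (fun i => shiftS A v (σ i))
            ((σ (A.owner v)).next [] v) j).1,
         (outcomeAux A (fun i => shiftS A v (σ i))
            ((σ (A.owner v)).next [] v) j).2) := by
  induction j with
  | zero => rfl
  | succ j ih =>
      show ((outcomeAux A σ v (j+1)).1 ++ [(outcomeAux A σ v (j+1)).2],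
              (σ (A.owner (outcomeAux A σ v (j+1)).2)).next (outcomeAux A σ v (j+1)).1
                (outcomeAux A σ v (j+1)).2) = _
      rw [ih]
      rfl

lemma outcome_shift (σ : Fin 2 → A.Strategy) (v : V) :
    outcome A σ v = consP v (outcome A (fun i => shiftS A v (σ i))
      ((σ (A.owner v)).next [] v)) := by
  funext j
  cases j with
  | zero => rfl
  | succ j =>
      show (outcomeAux A σ v (j+1)).2 = _
      rw [outcomeAux_shift]
      rfl

lemma spCost_eq_top (π : ℕ → V) (h : ∀ k, π k ∉ T) : spCost w T π = ⊤ := by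
  unfold spCost
  rw [if_neg]
  push_neg
  exact h

lemma spCost_of_mem (π : ℕ → V) (h : π 0 ∈ T) : spCost w T π = 0 := by
  unfold spCost
  rw [if_pos ⟨0, h⟩]
  have h0 : sInf {k | π k ∈ T} = 0 := Nat.sInf_eq_zero.mpr (Or.inl h)
  rw [h0]
  simp

lemma spCost_consP (v : V) (π : ℕ → V) (hv : v ∉ T) :
    spCost w T (consP v π) = (w v (π 0) : ℝ≥0∞) + spCost w T π := by
  by_cases hT : ∃ k, π k ∈ T
  · obtain ⟨k, hk⟩ := hT
    have hT2 : ∃ k, π k ∈ T := ⟨k, hk⟩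
    have hT' : ∃ k, consP v π k ∈ T := ⟨k + 1, hk⟩
    have hmem : π (sInf {k | π k ∈ T}) ∈ T := Nat.sInf_mem hT2
    have hinf : sInf {k | consP v π k ∈ T} = sInf {k | π k ∈ T} + 1 := by
      apply le_antisymm
      · exact Nat.sInf_le hmem
      · refine le_csInf hT' ?_
        intro b hb
        match b with
        | 0 => exact absurd hb hv
        | b + 1 => exact Nat.succ_le_succ (Nat.sInf_le hb)
    unfold spCost
    rw [if_pos hT', if_pos hT2, hinf, Finset.sum_range_succ']
    have hf : ∀ i : ℕ,
        (w (consP v π (i+1)) (consP v π (i+1+1)) : ℝ≥0∞) = (w (π i) (π (i+1)) : ℝ≥0∞) :=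
      fun i => rfl
    simp only [hf]
    show _ + (w v (π 0) : ℝ≥0∞) = _
    rw [add_comm]
  · have hT' : ¬ ∃ k, consP v π k ∈ T := by
      rintro ⟨k, hk⟩
      match k with
      | 0 => exact hv hk
      | k + 1 => exact hT ⟨k, hk⟩
    unfold spCost
    rw [if_neg hT', if_neg hT]; simp

lemma valIS_of_T (v : V) (h : v ∈ T) : valIS A (spCost w T) v = 0 := by
  refine le_antisymm ?_ zero_le
  refine iInf_le_of_le (Classical.arbitrary _) ?_
  refine iSup_le fun σ2 => ?_
  rw [spCost_of_mem T w _ h]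

lemma valIS_top_of_W (v : V) (hv : v ∈ WinRegion A 1 (SafeObj T)) :
    valIS A (spCost w T) v = ⊤ := by
  obtain ⟨σ, hσ⟩ := hv
  refine top_unique (le_iInf fun σ1 => le_iSup_of_le σ ?_)
  have hcons : A.Consistent 1 σ (outcome A ![σ1, σ] v) := by
    have := outcome_consistent A ![σ1, σ] v 1
    simpa using this
  have hs := hσ (outcome A ![σ1, σ] v) (outcome_isPlay A _ v) rfl hcons
  rw [spCost_eq_top T w _ hs]

lemma W_step (v v' : V) (σ : A.Strategy)
    (hσ : ∀ π, A.IsPlay π → π 0 = v → A.Consistent 1 σ π → π ∈ SafeObj T)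
    (he : A.E v v') (hmove : A.owner v = 1 → v' = σ.next [] v) :
    v' ∈ WinRegion A 1 (SafeObj T) := by
  refine ⟨shiftS A v σ, fun π' hp h0 hc j => ?_⟩
  have hplay : A.IsPlay (consP v π') := by
    intro j
    match j with
    | 0 => show A.E v (π' 0); rw [h0]; exact he
    | j + 1 => exact hp j
  have hcons : A.Consistent 1 σ (consP v π') := by
    intro j hj
    match j with
    | 0 =>
        show π' 0 = σ.next (pref (consP v π') 0) v
        rw [h0, hmove hj]
        rfl
    | j + 1 =>
        show π' (j + 1) = σ.next (pref (consP v π') (j+1)) (π' j)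
        rw [pref_consP]
        exact hc j hj
  exact hσ (consP v π') hplay rfl hcons (j + 1)

lemma W_not_T (v : V) (hv : v ∈ WinRegion A 1 (SafeObj T)) : v ∉ T := by
  obtain ⟨σ, hσ⟩ := hv
  have hcons : A.Consistent 1 σ (outcome A ![Classical.arbitrary _, σ] v) := by
    have := outcome_consistent A ![Classical.arbitrary _, σ] v 1
    simpa using this
  exact hσ _ (outcome_isPlay A _ v) rfl hcons 0

lemma W_succ_p2 (v : V) (hv : v ∈ WinRegion A 1 (SafeObj T)) (ho : A.owner v = 1) :
    ∃ v', A.E v v' ∧ v' ∈ WinRegion A 1 (SafeObj T) := by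
  obtain ⟨σ, hσ⟩ := hv
  exact ⟨σ.next [] v, σ.valid [] v, W_step A T v _ σ hσ (σ.valid [] v) fun _ => rfl⟩

lemma W_succ_p1 (v : V) (hv : v ∈ WinRegion A 1 (SafeObj T)) (ho : A.owner v = 0)
    (v' : V) (he : A.E v v') : v' ∈ WinRegion A 1 (SafeObj T) := by
  obtain ⟨σ, hσ⟩ := hv
  refine W_step A T v v' σ hσ he fun h1 => absurd (ho.symm.trans h1) (by decide)

/-- Values that are (extended) naturals. -/
def NatInf : Set ℝ≥0∞ := Set.range ((↑) : ℕ → ℝ≥0∞) ∪ {⊤}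

lemma spCost_mem_NatInf (π : ℕ → V) : spCost w T π ∈ NatInf := by
  unfold spCost
  split
  · exact Or.inl ⟨_, Nat.cast_sum _ _⟩
  · exact Or.inr rfl

lemma sSup_mem_NatInf (S : Set ℝ≥0∞) (hS : ∀ x ∈ S, x ∈ NatInf) : sSup S ∈ NatInf := by
  by_cases htop : sSup S = ⊤
  · exact Or.inr htop
  by_cases hne : S.Nonempty
  · have hSA : ∀ x ∈ S, ∃ n : ℕ, (n : ℝ≥0∞) ∈ S ∧ x = n := by
      intro x hx
      rcases hS x hx with ⟨n, rfl⟩ | h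
      · exact ⟨n, hx, rfl⟩
      · simp only [Set.mem_singleton_iff] at h
        exact absurd (top_unique (h ▸ le_sSup hx)) htop
    obtain ⟨N, hN⟩ := ENNReal.exists_nat_gt htop
    have hbdd : BddAbove {n : ℕ | (n : ℝ≥0∞) ∈ S} := by
      refine ⟨N, fun n hn => ?_⟩
      have h1 : (n : ℝ≥0∞) ≤ sSup S := le_sSup hn
      exact_mod_cast h1.trans hN.le
    obtain ⟨x, hx⟩ := hne
    obtain ⟨n0, hn0, _⟩ := hSA x hx
    have hmem := Nat.sSup_mem ⟨n0, hn0⟩ hbdd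
    refine Or.inl ⟨sSup {n : ℕ | (n : ℝ≥0∞) ∈ S}, le_antisymm (le_sSup hmem) ?_⟩
    refine sSup_le fun y hy => ?_
    obtain ⟨n, hn, rfl⟩ := hSA y hy
    exact_mod_cast le_csSup hbdd hn
  · rw [Set.not_nonempty_iff_eq_empty.mp hne, sSup_empty]
    exact Or.inl ⟨0, by simp⟩

lemma sInf_mem_NatInf (S : Set ℝ≥0∞) (hS : ∀ x ∈ S, x ∈ NatInf) : sInf S ∈ NatInf := by
  by_cases hA : ∃ n : ℕ, (n : ℝ≥0∞) ∈ S
  · obtain ⟨n0, hn0⟩ := hA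
    have hmem := Nat.sInf_mem (⟨n0, hn0⟩ : Set.Nonempty {n : ℕ | (n : ℝ≥0∞) ∈ S})
    refine Or.inl ⟨sInf {n : ℕ | (n : ℝ≥0∞) ∈ S}, le_antisymm ?_ (sInf_le hmem)⟩
    refine le_sInf fun y hy => ?_
    rcases hS y hy with ⟨m, rfl⟩ | h
    · exact_mod_cast Nat.sInf_le hy
    · simp only [Set.mem_singleton_iff] at h
      simp [h]
  · refine Or.inr (top_unique (le_sInf fun y hy => ?_))
    rcases hS y hy with ⟨m, rfl⟩ | h
    · exact absurd ⟨m, hy⟩ hA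
    · simp only [Set.mem_singleton_iff] at h
      simp [h]

lemma valIS_mem_NatInf (v : V) : valIS A (spCost w T) v ∈ NatInf := by
  unfold valIS
  rw [← sInf_range]
  apply sInf_mem_NatInf
  rintro x ⟨σ1, rfl⟩
  show (⨆ σ2 : A.Strategy, spCost w T (outcome A ![σ1, σ2] v)) ∈ NatInf
  rw [← sSup_range]
  apply sSup_mem_NatInf
  rintro y ⟨σ2, rfl⟩
  exact spCost_mem_NatInf T w _

end Aux

section Aux2

variable {V : Type} (A : Arena V 2) (T : Set V) (w : V → V → ℕ) (α : ℕ)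

/-- Capped value. -/
noncomputable def gval (v : V) : ℝ≥0∞ := min (valIS A (spCost w T) v) (α : ℝ≥0∞)

lemma gval_nat (v : V) : ∃ n : ℕ, gval A T w α v = (n : ℝ≥0∞) := by
  rcases valIS_mem_NatInf A T w v with ⟨m, hm⟩ | h
  · refine ⟨min m α, ?_⟩
    unfold gval
    rw [← hm]
    rcases le_total m α with h1 | h1
    · rw [min_eq_left h1, min_eq_left (by exact_mod_cast h1)]
    · rw [min_eq_right h1, min_eq_right (by exact_mod_cast h1)]
  · simp only [Set.mem_singleton_iff] at h
    exact ⟨α, by unfold gval; rw [h, min_eq_right le_top]⟩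

lemma gval_of_T (v : V) (h : v ∈ T) : gval A T w α v = 0 := by
  unfold gval
  rw [valIS_of_T A T w v h]
  simp

lemma gval_of_W (v : V) (h : v ∈ WinRegion A 1 (SafeObj T)) : gval A T w α v = (α : ℝ≥0∞) := by
  unfold gval
  rw [valIS_top_of_W A T w v h, min_eq_right le_top]

lemma min_add_le (c x a : ℝ≥0∞) : min (c + x) a ≤ c + min x a := by
  rcases le_total x a with h | h
  · rw [min_eq_left h]; exact min_le_left _ _
  · rw [min_eq_right h]; exact (min_le_right _ _).trans le_add_self

lemma min_iSup_le {ι : Type*} [Nonempty ι] (f : ι → ℝ≥0∞) (a : ℝ≥0∞) :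
    min (⨆ i, f i) a ≤ ⨆ i, min (f i) a := by
  by_cases h : ∃ i, a ≤ f i
  · obtain ⟨i, hi⟩ := h
    refine le_iSup_of_le i ?_
    rw [min_eq_right hi]
    exact min_le_right _ _
  · push_neg at h
    have h2 : ∀ i, min (f i) a = f i := fun i => min_eq_left (h i).le
    calc min (⨆ i, f i) a ≤ ⨆ i, f i := min_le_left _ _
      _ = ⨆ i, min (f i) a := by simp only [h2]

lemma exists_nat_le_of_le_iSup {ι : Type*} [Nonempty ι] (f : ι → ℝ≥0∞) (c : ℕ)
    (hf : ∀ i, ∃ n : ℕ, f i = (n : ℝ≥0∞)) (h : (c : ℝ≥0∞) ≤ ⨆ i, f i) :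
    ∃ i, (c : ℝ≥0∞) ≤ f i := by
  by_contra hc
  push_neg at hc
  match c with
  | 0 => exact (hc (Classical.arbitrary ι)).not_ge (by simp)
  | c + 1 =>
      have hle : ∀ i, f i ≤ (c : ℝ≥0∞) := by
        intro i
        obtain ⟨n, hn⟩ := hf i
        have h1 := hc i
        rw [hn] at h1 ⊢
        have h2 : n < c + 1 := by exact_mod_cast h1
        exact_mod_cast Nat.lt_succ_iff.mp h2
      have h3 : ((c : ℕ) : ℝ≥0∞) + 1 ≤ (c : ℝ≥0∞) := by
        calc ((c : ℕ) : ℝ≥0∞) + 1 = ((c + 1 : ℕ) : ℝ≥0∞) := by push_cast; ring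
          _ ≤ ⨆ i, f i := h
          _ ≤ (c : ℝ≥0∞) := iSup_le hle
      have h4 : (c : ℕ) + 1 ≤ (c : ℕ) := by exact_mod_cast h3
      omega

lemma valIS_step_p1 (v v' : V) (hv : v ∉ T) (he : A.E v v') (hown : A.owner v = 0) :
    valIS A (spCost w T) v ≤ (w v v' : ℝ≥0∞) + valIS A (spCost w T) v' := by
  have key : ∀ σ1' : A.Strategy, valIS A (spCost w T) v ≤
      (w v v' : ℝ≥0∞) + ⨆ σ2' : A.Strategy, spCost w T (outcome A ![σ1', σ2'] v') := by
    intro σ1'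
    set σ1c : A.Strategy :=
      ⟨fun h u => if h = [] then (if u = v then v' else dflt A u) else σ1'.next h.tail u, by
        intro h u
        show A.E u (if h = [] then (if u = v then v' else dflt A u) else σ1'.next h.tail u)
        by_cases h1 : h = []
        · by_cases h2 : u = v
          · rw [if_pos h1, if_pos h2, h2]; exact he
          · rw [if_pos h1, if_neg h2]; exact dflt_edge A u
        · rw [if_neg h1]; exact σ1'.valid _ _⟩ with hσ1c
    refine iInf_le_of_le σ1c (iSup_le fun σ2 => ?_)
    have hfirst : (![σ1c, σ2] (A.owner v)).next [] v = v' := by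
      rw [hown]
      show σ1c.next [] v = v'
      rw [hσ1c]
      simp
    have hshift := outcome_shift A ![σ1c, σ2] v
    rw [hfirst] at hshift
    have hcongr : outcome A (fun i => shiftS A v (![σ1c, σ2] i)) v' =
        outcome A ![σ1', shiftS A v σ2] v' := by
      apply outcome_congr
      intro j i
      rcases fin2 i with rfl | rfl
      · show (shiftS A v σ1c).next _ _ = σ1'.next _ _
        show σ1c.next (v :: _) _ = _
        rw [hσ1c]
        simp
      · rfl
    rw [hshift, hcongr, spCost_consP T w v _ hv]
    show (w v _ : ℝ≥0∞) + _ ≤ _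
    have h0 : outcome A ![σ1', shiftS A v σ2] v' 0 = v' := rfl
    rw [h0]
    exact add_le_add_right (le_iSup (fun σ2' => spCost w T (outcome A ![σ1', σ2'] v')) _) _
  calc valIS A (spCost w T) v
      ≤ ⨅ σ1' : A.Strategy, ((w v v' : ℝ≥0∞) +
          ⨆ σ2' : A.Strategy, spCost w T (outcome A ![σ1', σ2'] v')) := le_iInf key
    _ = (w v v' : ℝ≥0∞) + valIS A (spCost w T) v' := ENNReal.add_iInf.symm

lemma valIS_step_p2 (v : V) (hv : v ∉ T) (hown : A.owner v = 1) :
    valIS A (spCost w T) v ≤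
      ⨆ s : {x // A.E v x}, ((w v s.1 : ℝ≥0∞) + valIS A (spCost w T) s.1) := by
  haveI : Nonempty {x // A.E v x} := ⟨⟨dflt A v, dflt_edge A v⟩⟩
  refine le_of_forall_gt_imp_ge_of_dense fun b hb => ?_
  have hchoice : ∀ s : {x // A.E v x}, ∃ σ1s : A.Strategy,
      (w v s.1 : ℝ≥0∞) + (⨆ σ2' : A.Strategy, spCost w T (outcome A ![σ1s, σ2'] s.1)) ≤ b := by
    intro s
    have h1 : (w v s.1 : ℝ≥0∞) + valIS A (spCost w T) s.1 < b :=
      lt_of_le_of_lt (le_iSup (fun s : {x // A.E v x} =>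
        (w v s.1 : ℝ≥0∞) + valIS A (spCost w T) s.1) s) hb
    have hcanc : AddLECancellable (w v s.1 : ℝ≥0∞) :=
      ENNReal.cancel_of_ne (ENNReal.natCast_ne_top _)
    have h2 : valIS A (spCost w T) s.1 < b - (w v s.1 : ℝ≥0∞) :=
      hcanc.lt_tsub_iff_left.mpr h1
    obtain ⟨σ1s, hσ⟩ := iInf_lt_iff.mp h2
    exact ⟨σ1s, (hcanc.lt_tsub_iff_left.mp hσ).le⟩
  choose σ1s hσ1s using hchoice
  set F : V → A.Strategy := fun x =>
    if hx : A.E v x then σ1s ⟨x, hx⟩ else Classical.arbitrary _ with hF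
  set σ1c : A.Strategy :=
    ⟨fun h u => match h with
      | [] => dflt A u
      | [_] => (F u).next [] u
      | _ :: x :: r => (F x).next (x :: r) u, by
        intro h u
        match h with
        | [] => exact dflt_edge A u
        | [_] => exact (F u).valid [] u
        | _ :: x :: r => exact (F x).valid (x :: r) u⟩ with hσ1c
  refine (iInf_le_of_le σ1c (iSup_le fun σ2 => ?_))
  set v1 := σ2.next [] v with hv1
  have he1 : A.E v v1 := σ2.valid [] v
  have hfirst : (![σ1c, σ2] (A.owner v)).next [] v = v1 := by
    rw [hown]; rfl
  have hshift := outcome_shift A ![σ1c, σ2] v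
  rw [hfirst] at hshift
  set out := outcome A (fun i => shiftS A v (![σ1c, σ2] i)) v1 with hout
  have h00 : out 0 = v1 := rfl
  have hcongr : out = outcome A ![F v1, shiftS A v σ2] v1 := by
    apply outcome_congr
    intro j i
    rcases fin2 i with rfl | rfl
    · show (shiftS A v σ1c).next (pref out j) (out j) = (F v1).next (pref out j) (out j)
      cases j with
      | zero =>
          show σ1c.next [v] (out 0) = (F v1).next [] (out 0)
          rw [h00]
      | succ j =>
          have hp : pref out (j + 1) = v1 :: pref (fun m => out (m + 1)) j := by
            rw [pref_succ_head, h00]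
          rw [hp]
          rfl
    · rfl
  rw [hshift, hcongr, spCost_consP T w v _ hv]
  have h0 : outcome A ![F v1, shiftS A v σ2] v1 0 = v1 := rfl
  rw [h0]
  have hFv1 : F v1 = σ1s ⟨v1, he1⟩ := by rw [hF]; simp [he1]
  calc (w v v1 : ℝ≥0∞) + spCost w T (outcome A ![F v1, shiftS A v σ2] v1)
      ≤ (w v v1 : ℝ≥0∞) + ⨆ σ2' : A.Strategy, spCost w T (outcome A ![F v1, σ2'] v1) :=
        add_le_add_right (le_iSup (fun σ2' => spCost w T (outcome A ![F v1, σ2'] v1)) _) _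
    _ = (w v v1 : ℝ≥0∞) + ⨆ σ2' : A.Strategy,
          spCost w T (outcome A ![σ1s ⟨v1, he1⟩, σ2'] v1) := by rw [hFv1]
    _ ≤ b := hσ1s ⟨v1, he1⟩

lemma gval_step_p2 (v : V) (hv : v ∉ T) (hown : A.owner v = 1) :
    ∃ v', A.E v v' ∧ gval A T w α v ≤ (w v v' : ℝ≥0∞) + gval A T w α v' := by
  haveI : Nonempty {x // A.E v x} := ⟨⟨dflt A v, dflt_edge A v⟩⟩
  have h1 := valIS_step_p2 A T w v hv hown
  have h2 : gval A T w α v ≤ ⨆ s : {x // A.E v x}, ((w v s.1 : ℝ≥0∞) + gval A T w α s.1) := by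
    calc gval A T w α v
        ≤ min (⨆ s : {x // A.E v x}, ((w v s.1 : ℝ≥0∞) + valIS A (spCost w T) s.1)) (α : ℝ≥0∞) :=
          min_le_min h1 le_rfl
      _ ≤ ⨆ s : {x // A.E v x}, min ((w v s.1 : ℝ≥0∞) + valIS A (spCost w T) s.1) (α : ℝ≥0∞) :=
          min_iSup_le _ _
      _ ≤ ⨆ s : {x // A.E v x}, ((w v s.1 : ℝ≥0∞) + gval A T w α s.1) :=
          iSup_mono fun s => min_add_le _ _ _
  obtain ⟨n, hn⟩ := gval_nat A T w α v
  rw [hn] at h2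
  obtain ⟨s, hs⟩ := exists_nat_le_of_le_iSup _ n (fun s => by
    obtain ⟨m, hm⟩ := gval_nat A T w α s.1
    exact ⟨w v s.1 + m, by rw [hm]; push_cast; ring⟩) h2
  exact ⟨s.1, s.2, hn ▸ hs⟩

lemma exists_good_succ (u : V) : ∃ u', A.E u u' ∧
    (u ∈ WinRegion A 1 (SafeObj T) → A.owner u = 1 → u' ∈ WinRegion A 1 (SafeObj T)) ∧
    (A.owner u = 1 → u ∉ T → gval A T w α u ≤ (w u u' : ℝ≥0∞) + gval A T w α u') := by
  by_cases hW : u ∈ WinRegion A 1 (SafeObj T)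
  · by_cases ho : A.owner u = 1
    · obtain ⟨u', he, hu'W⟩ := W_succ_p2 A T u hW ho
      refine ⟨u', he, fun _ _ => hu'W, fun _ _ => ?_⟩
      rw [gval_of_W A T w α u' hu'W]
      calc gval A T w α u ≤ (α : ℝ≥0∞) := min_le_right _ _
        _ ≤ (w u u' : ℝ≥0∞) + (α : ℝ≥0∞) := le_add_self
    · exact ⟨dflt A u, dflt_edge A u, fun _ h1 => absurd h1 ho, fun h1 _ => absurd h1 ho⟩
  · by_cases h : A.owner u = 1 ∧ u ∉ T
    · obtain ⟨u', he, hg⟩ := gval_step_p2 A T w α u h.2 h.1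
      exact ⟨u', he, fun hw _ => absurd hw hW, fun _ _ => hg⟩
    · exact ⟨dflt A u, dflt_edge A u, fun hw _ => absurd hw hW,
        fun h1 h2 => absurd ⟨h1, h2⟩ h⟩

end Aux2

/-- In a zero-sum shortest-path game, for every `α ∈ ℕ`, player 2 has
a memoryless strategy that wins the safety game from their safety winning region
and ensures a cost of at least `min (val v) α` from every vertex `v`. -/
theorem spath_player2_memoryless_punishing
    (V : Type) (A : Arena V 2) (T : Set V) (w : V → V → ℕ) (α : ℕ) :
    ∃ σ2 : A.Strategy, Memoryless σ2 ∧
      (∀ v ∈ WinRegion A 1 (SafeObj T),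
        ∀ π : ℕ → V, A.IsPlay π → π 0 = v → A.Consistent 1 σ2 π → ∀ j, π j ∉ T) ∧
      (∀ (v : V) (π : ℕ → V), A.IsPlay π → π 0 = v → A.Consistent 1 σ2 π →
        min (valIS A (spCost w T) v) (α : ℝ≥0∞) ≤ spCost w T π) := by
  classical
  choose f hfE hfW hfg using exists_good_succ A T w α
  refine ⟨⟨fun _ u => f u, fun _ u => hfE u⟩, fun _ _ _ => rfl, ?_, ?_⟩
  · intro v hv π hplay h0 hcons j
    have hWmem : ∀ j, π j ∈ WinRegion A 1 (SafeObj T) := by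
      intro j
      induction j with
      | zero => rwa [h0]
      | succ j ih =>
          rcases fin2 (A.owner (π j)) with h1 | h1
          · exact W_succ_p1 A T (π j) ih h1 _ (hplay j)
          · rw [hcons j h1]; exact hfW (π j) ih h1
    exact W_not_T A T _ (hWmem j)
  · intro v π hplay h0 hcons
    by_cases hT : ∃ k, π k ∈ T
    · have hNT : π (sInf {k | π k ∈ T}) ∈ T := Nat.sInf_mem hT
      set N := sInf {k | π k ∈ T} with hN
      have hlt : ∀ j, j < N → π j ∉ T := by
        intro j hj hmem
        have h2 : N ≤ j := Nat.sInf_le hmem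
        omega
      have key : ∀ d j, j + d = N →
          gval A T w α (π j) ≤ ∑ m ∈ Finset.Ico j N, (w (π m) (π (m + 1)) : ℝ≥0∞) := by
        intro d
        induction d with
        | zero =>
            intro j hj
            have : j = N := by omega
            subst this
            rw [gval_of_T A T w α _ hNT]
            exact zero_le
        | succ d ih =>
            intro j hj
            have hjN : j < N := by omega
            have hnotT : π j ∉ T := hlt j hjN
            have hsum : ∑ m ∈ Finset.Ico j N, (w (π m) (π (m + 1)) : ℝ≥0∞)
                = (w (π j) (π (j + 1)) : ℝ≥0∞)
                  + ∑ m ∈ Finset.Ico (j + 1) N, (w (π m) (π (m + 1)) : ℝ≥0∞) :=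
              Finset.sum_eq_sum_Ico_succ_bot hjN _
            have ihs := ih (j + 1) (by omega)
            rcases fin2 (A.owner (π j)) with h1 | h1
            · have hstep := valIS_step_p1 A T w (π j) (π (j + 1)) hnotT (hplay j) h1
              have h2 : gval A T w α (π j) ≤
                  (w (π j) (π (j + 1)) : ℝ≥0∞) + gval A T w α (π (j + 1)) :=
                (min_le_min hstep le_rfl).trans (min_add_le _ _ _)
              calc gval A T w α (π j)
                  ≤ (w (π j) (π (j + 1)) : ℝ≥0∞) + gval A T w α (π (j + 1)) := h2
                _ ≤ (w (π j) (π (j + 1)) : ℝ≥0∞)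
                    + ∑ m ∈ Finset.Ico (j + 1) N, (w (π m) (π (m + 1)) : ℝ≥0∞) :=
                      add_le_add_right ihs _
                _ = _ := hsum.symm
            · have hc : π (j + 1) = f (π j) := hcons j h1
              have h2 := hfg (π j) h1 hnotT
              rw [← hc] at h2
              calc gval A T w α (π j)
                  ≤ (w (π j) (π (j + 1)) : ℝ≥0∞) + gval A T w α (π (j + 1)) := h2
                _ ≤ (w (π j) (π (j + 1)) : ℝ≥0∞)
                    + ∑ m ∈ Finset.Ico (j + 1) N, (w (π m) (π (m + 1)) : ℝ≥0∞) :=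
                      add_le_add_right ihs _
                _ = _ := hsum.symm
      have hkey := key N 0 (by omega)
      have hcost : spCost w T π = ∑ m ∈ Finset.range N, (w (π m) (π (m + 1)) : ℝ≥0∞) := by
        unfold spCost
        rw [if_pos hT]
      rw [hcost, Finset.range_eq_Ico]
      have : gval A T w α (π 0) = min (valIS A (spCost w T) v) (α : ℝ≥0∞) := by
        rw [h0]; rfl
      rw [← this]
      exact hkey
    · push_neg at hT
      rw [spCost_eq_top T w π hT]
      exact le_top
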